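/- For any nonincreasing nonnegative λ and any b ∈ ℝ^p, the sorted ℓ₁ norm admits the dual characterization J_λ(b) = sup { ⟨w, b⟩ : w ∈ C_λ }, where C_λ = { w ∈ ℝ^p : Σ_{j ≤ i} |w|₍ⱼ₎ ≤ Σ_{j ≤ i} λⱼ for all i = 1,…,p }. -/
import Mathlib


/-- The `i`-th largest absolute value among the coordinates of `b`. -/
noncomputable def sortedAbs {p : ℕ} (b : Fin p → ℝ) (i : Fin p) : ℝ :=
  |b (Tuple.sort (fun j => |b j|) i.rev)|

/-- The sorted ℓ₁ norm `J_λ(b) = ∑ᵢ λᵢ |b|₍ᵢ₎`. -/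
noncomputable def sortedL1 {p : ℕ} (lam b : Fin p → ℝ) : ℝ :=
  ∑ i, lam i * sortedAbs b i

open Finset

namespace SortedL1Aux

/-- The permutation realizing the decreasing rearrangement. -/
noncomputable def permOf {p : ℕ} (b : Fin p → ℝ) : Equiv.Perm (Fin p) :=
  (Fin.revPerm).trans (Tuple.sort (fun j => |b j|))

lemma sortedAbs_eq_comp {p : ℕ} (b : Fin p → ℝ) (i : Fin p) :
    sortedAbs b i = |b (permOf b i)| := rfl

lemma sortedAbs_nonneg {p : ℕ} (b : Fin p → ℝ) (i : Fin p) : 0 ≤ sortedAbs b i :=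
  abs_nonneg _

lemma sortedAbs_antitone {p : ℕ} (b : Fin p → ℝ) : Antitone (sortedAbs b) := by
  intro i j hij
  have h := Tuple.monotone_sort (fun j => |b j|)
  have := h (Fin.rev_le_rev.mpr hij)
  simpa [Function.comp, sortedAbs] using this

lemma strictMono_fin_le {m n : ℕ} {f : Fin m → Fin n} (hf : StrictMono f) (k : Fin m) :
    (k : ℕ) ≤ (f k : ℕ) := by
  set g : ℕ → ℕ := fun a => if h : a < m then (f ⟨a, h⟩ : ℕ) else a + n with hg
  have hgmono : StrictMono g := by
    intro a b hab
    simp only [hg]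
    rcases Nat.lt_or_ge a m with ha | ha
    · rcases Nat.lt_or_ge b m with hb | hb
      · rw [dif_pos ha, dif_pos hb]
        exact hf (show (⟨a, ha⟩ : Fin m) < ⟨b, hb⟩ from hab)
      · rw [dif_pos ha, dif_neg (not_lt.mpr hb)]
        calc (f ⟨a, ha⟩ : ℕ) < n := (f _).2
          _ ≤ b + n := le_add_self
    · have hb : ¬ b < m := by omega
      rw [dif_neg (not_lt.mpr ha), dif_neg hb]
      omega
  have := hgmono.le_apply (x := (k : ℕ))
  simpa [hg, k.2] using this

lemma sum_subset_le {p : ℕ} {lam : Fin p → ℝ} (hmono : Antitone lam)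
    (A : Finset (Fin p)) (i : Fin p) (hA : A.card = i.1 + 1) :
    ∑ j ∈ A, lam j ≤ ∑ j ∈ Iic i, lam j := by
  have hle : (i.1 + 1) ≤ p := i.2
  have hAmap : A = Finset.univ.map (A.orderEmbOfFin hA).toEmbedding := by
    ext x
    simp only [Finset.mem_map, Finset.mem_univ, true_and]
    constructor
    · intro hx
      have : x ∈ Set.range (A.orderEmbOfFin hA) := by
        rw [Finset.range_orderEmbOfFin]; exact hx
      obtain ⟨k, hk⟩ := this
      exact ⟨k, hk⟩
    · rintro ⟨k, rfl⟩
      exact Finset.orderEmbOfFin_mem A hA k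
  have hIic : (Iic i : Finset (Fin p)) =
      Finset.univ.map (Fin.castLEOrderEmb hle).toEmbedding := by
    ext x
    simp only [Finset.mem_map, Finset.mem_univ, true_and, Finset.mem_Iic]
    constructor
    · intro hx
      exact ⟨⟨x.1, Nat.lt_succ_of_le hx⟩, by ext; simp [Fin.castLEOrderEmb]⟩
    · rintro ⟨k, rfl⟩
      have hk2 := k.2
      have hval : ((Fin.castLEOrderEmb hle).toEmbedding k : Fin p).1 = k.1 := rfl
      simp only [Fin.le_def]
      omega
  rw [hAmap, hIic, Finset.sum_map, Finset.sum_map]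
  apply Finset.sum_le_sum
  intro k _
  apply hmono
  rw [Fin.le_def]
  exact strictMono_fin_le (A.orderEmbOfFin hA).strictMono k

lemma sum_Iic_eq_range {p : ℕ} (f : Fin p → ℝ) (i : Fin p) (g : ℕ → ℝ)
    (hg : ∀ j : Fin p, j ≤ i → g j.1 = f j) :
    ∑ j ∈ Iic i, f j = ∑ k ∈ range (i.1 + 1), g k := by
  refine Finset.sum_nbij' (fun j => j.1) (fun k => ⟨k % p, Nat.mod_lt _ i.pos⟩) ?_ ?_ ?_ ?_ ?_
  · intro j hj
    simp only [Finset.mem_Iic] at hj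
    simp only [Finset.mem_range]
    omega
  · intro k hk
    simp only [Finset.mem_range] at hk
    simp only [Finset.mem_Iic, Fin.le_def]
    have : k % p = k := Nat.mod_eq_of_lt (by omega)
    omega
  · intro j hj
    simp only [Finset.mem_Iic] at hj
    ext
    simp only []
    exact Nat.mod_eq_of_lt j.2
  · intro k hk
    simp only [Finset.mem_range] at hk
    exact Nat.mod_eq_of_lt (by omega)
  · intro j hj
    simp only [Finset.mem_Iic] at hj
    exact (hg j hj).symm

lemma abel_aux (d : ℕ → ℝ) :
    ∀ (n : ℕ) (h : ℕ → ℝ), (∀ k < n, ∑ j ∈ range (k + 1), d j ≤ 0) →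
    (∀ i j, i ≤ j → j < n → h j ≤ h i) → (∀ i < n, 0 ≤ h i) →
    ∑ i ∈ range n, d i * h i ≤ 0 := by
  intro n
  induction n with
  | zero => intro h _ _ _; simp
  | succ n ih =>
    intro h hsum hanti hpos
    have e1 : ∑ i ∈ range n, d i * (h i - h n)
        = ∑ i ∈ range n, d i * h i - (∑ i ∈ range n, d i) * h n := by
      rw [Finset.sum_mul, ← Finset.sum_sub_distrib]
      exact Finset.sum_congr rfl fun x _ => by ring
    have key : ∑ i ∈ range (n + 1), d i * h i =
        (∑ i ∈ range n, d i * (h i - h n)) + (∑ i ∈ range (n + 1), d i) * h n := by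
      rw [e1, Finset.sum_range_succ, Finset.sum_range_succ (f := d)]
      ring
    rw [key]
    have h1 : ∑ i ∈ range n, d i * (h i - h n) ≤ 0 := by
      apply ih (fun i => h i - h n)
      · intro k hk; exact hsum k (by omega)
      · intro i j hij hj
        have := hanti i j hij (by omega)
        linarith
      · intro i hi
        have := hanti i n (by omega) (by omega)
        linarith
    have h2 : (∑ i ∈ range (n + 1), d i) * h n ≤ 0 :=
      mul_nonpos_iff.mpr (Or.inr ⟨hsum n (by omega), hpos n (by omega)⟩)
    linarith

lemma abel_fin {p : ℕ} (a c lam : Fin p → ℝ)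
    (hc : Antitone c) (hc0 : ∀ i, 0 ≤ c i)
    (hcon : ∀ i : Fin p, ∑ j ∈ Iic i, a j ≤ ∑ j ∈ Iic i, lam j) :
    ∑ i, a i * c i ≤ ∑ i, lam i * c i := by
  set d : ℕ → ℝ := fun k => if h : k < p then a ⟨k, h⟩ - lam ⟨k, h⟩ else 0 with hd
  set h : ℕ → ℝ := fun k => if hk : k < p then c ⟨k, hk⟩ else 0 with hh
  have main : ∑ i ∈ range p, d i * h i ≤ 0 := by
    apply abel_aux
    · intro k hk
      have hi : ∀ j : Fin p, j ≤ (⟨k, hk⟩ : Fin p) → d j.1 = a j - lam j := by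
        intro j _
        simp only [hd, j.2, dif_pos, Fin.eta]
      have := sum_Iic_eq_range (fun j => a j - lam j) ⟨k, hk⟩ d hi
      rw [← this, Finset.sum_sub_distrib]
      have := hcon ⟨k, hk⟩
      linarith
    · intro i j hij hj
      simp only [hh, hj, dif_pos, dif_pos (lt_of_le_of_lt hij hj)]
      exact hc (show (⟨i, _⟩ : Fin p) ≤ ⟨j, hj⟩ from hij)
    · intro i hi
      simp only [hh, hi, dif_pos]
      exact hc0 _
  have heq : ∑ i ∈ range p, d i * h i = ∑ i : Fin p, (a i - lam i) * c i := by
    rw [← Fin.sum_univ_eq_sum_range (fun k => d k * h k) p]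
    apply Finset.sum_congr rfl
    intro i _
    simp only [hd, hh, i.2, dif_pos, Fin.eta]
  rw [heq] at main
  have : ∑ i : Fin p, (a i - lam i) * c i =
      ∑ i, a i * c i - ∑ i, lam i * c i := by
    rw [← Finset.sum_sub_distrib]
    apply Finset.sum_congr rfl
    intro i _; ring
  linarith [this ▸ main]

lemma sign_mul_self (x : ℝ) : Real.sign x * x = |x| := by
  rcases lt_trichotomy x 0 with h | h | h
  · rw [Real.sign_of_neg h, abs_of_neg h]; ring
  · simp [h]
  · rw [Real.sign_of_pos h, abs_of_pos h]; ring

lemma abs_sign_le (x : ℝ) : |Real.sign x| ≤ 1 := by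
  rcases lt_trichotomy x 0 with h | h | h
  · rw [Real.sign_of_neg h]; norm_num
  · simp [h]
  · rw [Real.sign_of_pos h]; norm_num

end SortedL1Aux

open SortedL1Aux

/-- dual characterization of the sorted ℓ₁ norm. -/
theorem sortedL1_dual {p : ℕ} (lam : Fin p → ℝ)
    (hmono : Antitone lam) (hnonneg : ∀ i, 0 ≤ lam i) (b : Fin p → ℝ) :
    sortedL1 lam b =
      sSup {x : ℝ | ∃ w : Fin p → ℝ,
        (∀ i : Fin p, ∑ j ∈ Finset.Iic i, sortedAbs w j ≤ ∑ j ∈ Finset.Iic i, lam j) ∧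
        x = ∑ i, w i * b i} := by
  set S := {x : ℝ | ∃ w : Fin p → ℝ,
        (∀ i : Fin p, ∑ j ∈ Finset.Iic i, sortedAbs w j ≤ ∑ j ∈ Finset.Iic i, lam j) ∧
        x = ∑ i, w i * b i} with hS
  have hmem : sortedL1 lam b ∈ S := by
    refine ⟨fun j => Real.sign (b j) * lam ((permOf b).symm j), ?_, ?_⟩
    · intro i
      set w : Fin p → ℝ := fun j => Real.sign (b j) * lam ((permOf b).symm j) with hw
      have h1 : ∑ j ∈ Finset.Iic i, sortedAbs w j
          = ∑ x ∈ (Finset.Iic i).image (permOf w), |w x| := by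
        rw [Finset.sum_image (fun x _ y _ h => (permOf w).injective h)]
        exact Finset.sum_congr rfl fun j _ => sortedAbs_eq_comp w j
      have h2 : ∀ x, |w x| ≤ lam ((permOf b).symm x) := by
        intro x
        rw [hw]
        rw [abs_mul]
        calc |Real.sign (b x)| * |lam ((permOf b).symm x)|
            ≤ 1 * |lam ((permOf b).symm x)| :=
              mul_le_mul_of_nonneg_right (abs_sign_le _) (abs_nonneg _)
          _ = lam ((permOf b).symm x) := by rw [one_mul, abs_of_nonneg (hnonneg _)]
      have h3 : ∑ x ∈ (Finset.Iic i).image (permOf w), |w x|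
          ≤ ∑ x ∈ (Finset.Iic i).image (permOf w), lam ((permOf b).symm x) :=
        Finset.sum_le_sum fun x _ => h2 x
      have h4 : ∑ x ∈ (Finset.Iic i).image (permOf w), lam ((permOf b).symm x)
          = ∑ y ∈ ((Finset.Iic i).image (permOf w)).image (permOf b).symm, lam y := by
        rw [Finset.sum_image (fun x _ y _ h => (permOf b).symm.injective h)]
      have hcard : (((Finset.Iic i).image (permOf w)).image (permOf b).symm).card
          = i.1 + 1 := by
        rw [Finset.card_image_of_injective _ (permOf b).symm.injective,
          Finset.card_image_of_injective _ (permOf w).injective, Fin.card_Iic]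
      have h5 := sum_subset_le hmono _ i hcard
      rw [h1]
      calc ∑ x ∈ (Finset.Iic i).image (permOf w), |w x|
          ≤ ∑ y ∈ ((Finset.Iic i).image (permOf w)).image (permOf b).symm, lam y :=
            h3.trans (le_of_eq h4)
        _ ≤ ∑ j ∈ Finset.Iic i, lam j := h5
    · have step : ∀ j, (Real.sign (b j) * lam ((permOf b).symm j)) * b j
          = lam ((permOf b).symm j) * |b j| := by
        intro j
        rw [show (Real.sign (b j) * lam ((permOf b).symm j)) * b j
            = lam ((permOf b).symm j) * (Real.sign (b j) * b j) by ring,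
          sign_mul_self]
      rw [Finset.sum_congr rfl fun j _ => step j]
      rw [← Equiv.sum_comp (permOf b) (fun j => lam ((permOf b).symm j) * |b j|)]
      simp only [Equiv.symm_apply_apply]
      rfl
  have hub : ∀ x ∈ S, x ≤ sortedL1 lam b := by
    rintro x ⟨w, hcon, rfl⟩
    have step1 : ∑ i, w i * b i ≤ ∑ i, |w i| * |b i| := by
      apply Finset.sum_le_sum
      intro i _
      calc w i * b i ≤ |w i * b i| := le_abs_self _
        _ = |w i| * |b i| := abs_mul _ _
    have hmv : Monovary (sortedAbs b) (sortedAbs w) := by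
      intro i j hij
      rcases le_or_gt i j with h | h
      · exact absurd hij (not_lt.mpr (sortedAbs_antitone w h))
      · exact sortedAbs_antitone b h.le
    have step2 : ∑ i, |w i| * |b i| ≤ ∑ i, sortedAbs b i * sortedAbs w i := by
      have reindex : ∑ i, |w i| * |b i|
          = ∑ k, sortedAbs b k * sortedAbs w (((permOf b).trans (permOf w).symm) k) := by
        rw [← Equiv.sum_comp (permOf b) (fun i => |w i| * |b i|)]
        apply Finset.sum_congr rfl
        intro k _
        rw [sortedAbs_eq_comp, sortedAbs_eq_comp]
        simp only [Equiv.trans_apply, Equiv.apply_symm_apply]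
        ring
      rw [reindex]
      exact hmv.sum_mul_comp_perm_le_sum_mul
    have step3 : ∑ i, sortedAbs w i * sortedAbs b i ≤ ∑ i, lam i * sortedAbs b i :=
      abel_fin (sortedAbs w) (sortedAbs b) lam (sortedAbs_antitone b)
        (sortedAbs_nonneg b) hcon
    have : ∑ i, sortedAbs b i * sortedAbs w i = ∑ i, sortedAbs w i * sortedAbs b i := by
      apply Finset.sum_congr rfl; intro i _; ring
    calc ∑ i, w i * b i ≤ ∑ i, |w i| * |b i| := step1
      _ ≤ ∑ i, sortedAbs b i * sortedAbs w i := step2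
      _ = ∑ i, sortedAbs w i * sortedAbs b i := this
      _ ≤ ∑ i, lam i * sortedAbs b i := step3
      _ = sortedL1 lam b := rfl
  exact (IsGreatest.csSup_eq ⟨hmem, hub⟩).symm
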